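/- The map F_S : B_id → B_S, given on objects by the quotient maps Γ_I → Γ_I/S and on morphisms by F_S(γ_I, γ_J) := (γ_J S, (γ_J|_I)γ_I^{-1}) for I ⊆ J, is a functor: it intertwines the source and target maps and satisfies m_S ∘ (F_S × F_S) = F_S ∘ m_id on composable pairs. Moreover F_S ∘ F_s = F_S for every s ∈ S, so F_S descends to the quotient and induces an isomorphism of categories B_id/S → B_S; consequently the induced inclusion B_S ≅ B_id/S ⊆ G_id/S exhibits the quotient groupoid G_id/S as a groupoid completion of B_S, i.e. an injective functor from B_S to a groupoid that is a bijection on objects, an isomorphism on stabilizer subgroups, and a bijection on realizations. -/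

import Mathlib

set_option linter.unusedSectionVars false
/-! Preamble for the category `B_S` of the canonical atlas on a point with
stabilizer group `S` (Example 2.2 of the paper). -/

/-- The product group `Γ_I = ∏_{i ∈ I} Γ_i`. -/
abbrev PiGamma {A : Type} (Γ : A → Type) (I : Finset A) : Type := (i : I) → Γ i.1

/-- Restriction (projection) homomorphism `Γ_J → Γ_I` for `I ⊆ J`. -/
def gres {A : Type} {Γ : A → Type} {I J : Finset A} (h : I ⊆ J) (γ : PiGamma Γ J) :
    PiGamma Γ I := fun i => γ ⟨i.1, h i.2⟩

section BS

variable {A : Type} [Fintype A] {Γ : A → Type} [∀ i, Group (Γ i)] [∀ i, Finite (Γ i)]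

theorem gres_mul {I J : Finset A} (h : I ⊆ J) (a b : PiGamma Γ J) :
    gres h (a * b) = gres h a * gres h b := rfl

theorem gres_one {I J : Finset A} (h : I ⊆ J) :
    gres (Γ := Γ) h 1 = 1 := rfl

/-- The free right action of `S ≤ Γ_A` on `Γ_I`, `γ · s := γ (s|_I)`, as a setoid whose
quotient is the orbit space `Γ_I/S`. -/
def relS (S : Subgroup (PiGamma Γ Finset.univ)) (I : Finset A) :
    Setoid (PiGamma Γ I) where
  r γ γ' := ∃ s : S, γ * gres (Finset.subset_univ I) (s : PiGamma Γ Finset.univ) = γ'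
  iseqv := by
    constructor
    · intro γ; exact ⟨1, by ext i; simp [gres]⟩
    · rintro γ γ' ⟨s, rfl⟩
      exact ⟨s⁻¹, by ext i; simp [gres, mul_assoc]⟩
    · rintro γ γ' γ'' ⟨s, rfl⟩ ⟨t, rfl⟩
      exact ⟨s * t, by ext i; simp [gres, mul_assoc]⟩

/-- The orbit space `Γ_I/S`. -/
abbrev WS (S : Subgroup (PiGamma Γ Finset.univ)) (I : Finset A) : Type :=
  Quotient (relS S I)

end BS

section Stmt10

variable {A : Type} [Fintype A] {Γ : A → Type} [∀ i, Group (Γ i)] [∀ i, Finite (Γ i)]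
variable (S : Subgroup (PiGamma Γ Finset.univ))

/-- Objects of `B_S` (and of `G_id/S`): the disjoint union of the orbit spaces `Γ_I/S`
over nonempty `I ⊆ A`. -/
abbrev BSObj : Type _ := Σ I : { I : Finset A // I.Nonempty }, WS S I.1

/-- Morphisms of `B_S`: the disjoint union over pairs `I ⊆ J` of `(Γ_J/S) × Γ_I`. -/
abbrev BSMor : Type _ :=
  Σ p : { p : Finset A × Finset A // p.1.Nonempty ∧ p.1 ⊆ p.2 },
    WS S p.1.2 × PiGamma Γ p.1.1

/-- Source of `(γ_J S, δ_I)`: the coset `δ_I⁻¹ (γ_J|_I) S`. -/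
def bsrcS : BSMor S → BSObj S := fun m =>
  ⟨⟨m.1.1.1, m.1.2.1⟩,
    Quotient.map (fun γJ => m.2.2⁻¹ * gres m.1.2.2 γJ)
      (by rintro γ γ' ⟨s, rfl⟩; exact ⟨s, by ext i; simp [gres, mul_assoc]⟩) m.2.1⟩

/-- Target of `(γ_J S, δ_I)`: the coset `γ_J S`. -/
def btgtS : BSMor S → BSObj S := fun m =>
  ⟨⟨m.1.1.2, m.1.2.1.mono m.1.2.2⟩, m.2.1⟩

/-- Objects of `B_id` (= `B_S` for `S = 1`): the disjoint union of the `Γ_I`. -/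
abbrev BidObj : Type _ := Σ I : { I : Finset A // I.Nonempty }, PiGamma Γ I.1

/-- Morphisms of `B_id` (equivalently of `G_id` from `I` to `J` with `I ⊆ J`): pairs
`(γ_I, γ_J)` with source `γ_I` and target `γ_J`. -/
abbrev BidMor : Type _ :=
  Σ p : { p : Finset A × Finset A // p.1.Nonempty ∧ p.1 ⊆ p.2 },
    PiGamma Γ p.1.1 × PiGamma Γ p.1.2

def bsrcId : BidMor (Γ := Γ) → BidObj (Γ := Γ) := fun m => ⟨⟨m.1.1.1, m.1.2.1⟩, m.2.1⟩

def btgtId : BidMor (Γ := Γ) → BidObj (Γ := Γ) :=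
  fun m => ⟨⟨m.1.1.2, m.1.2.1.mono m.1.2.2⟩, m.2.2⟩

/-- `F_S` on objects: the quotient maps `Γ_I → Γ_I/S`. -/
def FSobj : BidObj (Γ := Γ) → BSObj S := fun x => ⟨x.1, Quotient.mk (relS S x.1.1) x.2⟩

/-- `F_S` on morphisms: `(γ_I, γ_J) ↦ (γ_J S, (γ_J|_I)·γ_I⁻¹)`. -/
def FSmor : BidMor (Γ := Γ) → BSMor S := fun m =>
  ⟨m.1, (Quotient.mk (relS S m.1.1.2) m.2.2, gres m.1.2.2 m.2.2 * m.2.1⁻¹)⟩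

/-- The functor `F_s : G_id → G_id`, `γ ↦ γ·(s|)`, acting on `B_id ⊆ G_id`. -/
def FsMor (s : S) : BidMor (Γ := Γ) → BidMor (Γ := Γ) := fun m =>
  ⟨m.1, (m.2.1 * gres (Finset.subset_univ _) (s : PiGamma Γ Finset.univ),
         m.2.2 * gres (Finset.subset_univ _) (s : PiGamma Γ Finset.univ))⟩

/-- The diagonal right `S`-action on `Γ_I × Γ_J`, whose quotient is the space of
morphisms of `G_id/S` from the component `Γ_I/S` to the component `Γ_J/S`. -/
def relS2 (I J : Finset A) : Setoid (PiGamma Γ I × PiGamma Γ J) where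
  r p p' := ∃ s : S, p.1 * gres (Finset.subset_univ I) (s : PiGamma Γ Finset.univ) = p'.1
    ∧ p.2 * gres (Finset.subset_univ J) (s : PiGamma Γ Finset.univ) = p'.2
  iseqv := by
    constructor
    · intro p
      exact ⟨1, by ext i; simp [gres], by ext i; simp [gres]⟩
    · rintro p p' ⟨s, h1, h2⟩
      exact ⟨s⁻¹, by rw [← h1]; ext i; simp [gres, mul_assoc],
                  by rw [← h2]; ext i; simp [gres, mul_assoc]⟩
    · rintro p p' p'' ⟨s, h1, h2⟩ ⟨t, h3, h4⟩
      exact ⟨s * t, by rw [← h3, ← h1]; ext i; simp [gres, mul_assoc],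
                    by rw [← h4, ← h2]; ext i; simp [gres, mul_assoc]⟩

/-- Morphisms of the quotient groupoid `G_id/S`. -/
abbrev GidSMor : Type _ :=
  Σ p : { p : Finset A × Finset A // p.1.Nonempty ∧ p.2.Nonempty },
    Quotient (relS2 S p.1.1 p.1.2)

def gsrcS : GidSMor S → BSObj S := fun m =>
  ⟨⟨m.1.1.1, m.1.2.1⟩,
    Quotient.map Prod.fst (by rintro p p' ⟨s, h1, h2⟩; exact ⟨s, h1⟩) m.2⟩

def gtgtS : GidSMor S → BSObj S := fun m =>
  ⟨⟨m.1.1.2, m.1.2.2⟩,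
    Quotient.map Prod.snd (by rintro p p' ⟨s, h1, h2⟩; exact ⟨s, h2⟩) m.2⟩

/-- The inclusion `B_S → G_id/S`, `(γ_J S, δ_I) ↦ [(δ_I⁻¹·(γ_J|_I), γ_J)]`. -/
def iotaS : BSMor S → GidSMor S := fun m =>
  ⟨⟨m.1.1, ⟨m.1.2.1, m.1.2.1.mono m.1.2.2⟩⟩,
    Quotient.map (fun γJ => (m.2.2⁻¹ * gres m.1.2.2 γJ, γJ))
      (by rintro γ γ' ⟨s, rfl⟩
          exact ⟨s, by ext i; simp [gres, mul_assoc], rfl⟩) m.2.1⟩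

/-- Composition in `G_id/S`, as a relation: `[(x,y)] ∘ [(y,z)] = [(x,z)]`. -/
def IsCompGidS (m₁ m₂ m₃ : GidSMor S) : Prop :=
  ∃ (I J K : Finset A) (hI : I.Nonempty) (hJ : J.Nonempty) (hK : K.Nonempty)
    (γI : PiGamma Γ I) (γJ : PiGamma Γ J) (γK : PiGamma Γ K),
    m₁ = ⟨⟨(I, J), hI, hJ⟩, Quotient.mk (relS2 S I J) (γI, γJ)⟩ ∧
    m₂ = ⟨⟨(J, K), hJ, hK⟩, Quotient.mk (relS2 S J K) (γJ, γK)⟩ ∧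
    m₃ = ⟨⟨(I, K), hI, hK⟩, Quotient.mk (relS2 S I K) (γI, γK)⟩

/-- Identity morphisms of `G_id/S`. -/
def IsIdGidS (e : GidSMor S) : Prop :=
  ∃ (I : Finset A) (hI : I.Nonempty) (γ : PiGamma Γ I),
    e = ⟨⟨(I, I), hI, hI⟩, Quotient.mk (relS2 S I I) (γ, γ)⟩

/-- The relation generating the realization of `B_S`. -/
def stepBS (x y : BSObj S) : Prop := ∃ m : BSMor S, bsrcS S m = x ∧ btgtS S m = y

/-- The relation generating the realization of `G_id/S`. -/
def stepGidS (x y : BSObj S) : Prop := ∃ m : GidSMor S, gsrcS S m = x ∧ gtgtS S m = y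

end Stmt10

section Stmt10Thm

variable {A : Type} [Fintype A] {Γ : A → Type} [∀ i, Group (Γ i)] [∀ i, Finite (Γ i)]

lemma gres_inv {I J : Finset A} (h : I ⊆ J) (a : PiGamma Γ J) :
    gres h a⁻¹ = (gres h a)⁻¹ := rfl

lemma gres_gres {I J K : Finset A} (hIJ : I ⊆ J) (hJK : J ⊆ K) (γ : PiGamma Γ K) :
    gres hIJ (gres hJK γ) = gres (hIJ.trans hJK) γ := rfl

lemma gres_refl {I : Finset A} (h : I ⊆ I) (γ : PiGamma Γ I) : gres h γ = γ := rfl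

section Helpers

variable (S : Subgroup (PiGamma Γ Finset.univ))

lemma gres_coe_inv {I : Finset A} (s : S) :
    gres (Finset.subset_univ I) ((s⁻¹ : S) : PiGamma Γ Finset.univ)
      = (gres (Finset.subset_univ I) (s : PiGamma Γ Finset.univ))⁻¹ := rfl

/-- Free action: if `γ · s = γ` on a nonempty `I`, then `s = 1`. -/
lemma free_action (hinj : ∀ i : A, Function.Injective
      (fun s : S => (s : PiGamma Γ Finset.univ) ⟨i, Finset.mem_univ i⟩))
    {I : Finset A} (hI : I.Nonempty) {s t : S}
    (h : gres (Finset.subset_univ I) (s : PiGamma Γ Finset.univ)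
       = gres (Finset.subset_univ I) (t : PiGamma Γ Finset.univ)) : s = t := by
  obtain ⟨i, hi⟩ := hI
  exact hinj i (congrFun h ⟨i, hi⟩)

lemma gsrc_iota (m : BSMor S) : gsrcS S (iotaS S m) = bsrcS S m := by
  obtain ⟨⟨⟨I, J⟩, hI, hIJ⟩, q, δ⟩ := m
  induction q using Quotient.ind with
  | _ γJ => rfl

lemma gtgt_iota (m : BSMor S) : gtgtS S (iotaS S m) = btgtS S m := by
  obtain ⟨⟨⟨I, J⟩, hI, hIJ⟩, q, δ⟩ := m
  induction q using Quotient.ind with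
  | _ γJ => rfl

/-- Any two objects are connected in the realization of `B_S`. -/
lemma connBS (x y : BSObj S) : Quot.mk (stepBS S) x = Quot.mk (stepBS S) y := by
  classical
  obtain ⟨⟨I, hI⟩, q⟩ := x
  obtain ⟨⟨J, hJ⟩, r⟩ := y
  induction q using Quotient.ind with
  | _ α =>
  induction r using Quotient.ind with
  | _ β =>
  have key : ∀ (K : Finset A) (hK : K.Nonempty) (γ : PiGamma Γ K)
      (hKU : K ⊆ I ∪ J),
      Quot.mk (stepBS S) ⟨⟨K, hK⟩, Quotient.mk (relS S K) γ⟩ =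
      Quot.mk (stepBS S) ⟨⟨I ∪ J, hK.mono hKU⟩, Quotient.mk (relS S (I ∪ J)) 1⟩ := by
    intro K hK γ hKU
    refine Quot.sound ⟨⟨⟨(K, I ∪ J), hK, hKU⟩, (Quotient.mk _ 1, γ⁻¹)⟩, ?_, rfl⟩
    show (⟨⟨K, hK⟩, Quotient.mk (relS S K) (γ⁻¹⁻¹ * gres hKU 1)⟩ : BSObj S) = _
    simp [gres_one]
  rw [key I hI α Finset.subset_union_left, key J hJ β Finset.subset_union_right]

lemma gres_coe {I J : Finset A} (hIJ : I ⊆ J) (s : S) :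
    gres hIJ (gres (Finset.subset_univ J) (s : PiGamma Γ Finset.univ))
      = gres (Finset.subset_univ I) (s : PiGamma Γ Finset.univ) := rfl

lemma iota_inj : Function.Injective (iotaS S) := by
  rintro ⟨⟨⟨I, J⟩, hI, hIJ⟩, q, δ⟩ ⟨⟨⟨I', J'⟩, hI', hIJ'⟩, q', δ'⟩ h
  induction q using Quotient.ind with
  | _ γJ =>
  induction q' using Quotient.ind with
  | _ γJ' =>
  obtain ⟨h1, h2⟩ := Sigma.ext_iff.mp h
  obtain ⟨rfl, rfl⟩ : I = I' ∧ J = J' := by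
    have hv := congrArg Subtype.val h1
    exact ⟨congrArg Prod.fst hv, congrArg Prod.snd hv⟩
  replace h2 := eq_of_heq h2
  obtain ⟨s, e1, e2⟩ := Quotient.exact h2
  have hδ : δ = δ' := by
    have l : δ⁻¹ * gres hIJ γJ * gres (Finset.subset_univ I)
        (s : PiGamma Γ Finset.univ) = δ⁻¹ * gres hIJ γJ' := by
      rw [mul_assoc, ← gres_coe S hIJ s, ← gres_mul, e2]
    rw [l] at e1
    exact inv_injective (mul_right_cancel e1)
  subst hδ
  exact congrArg (Sigma.mk _) (Prod.ext (Quotient.sound ⟨s, e2⟩) rfl)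

lemma stepGidS_all (x y : BSObj S) : stepGidS S x y := by
  obtain ⟨⟨I, hI⟩, q⟩ := x
  obtain ⟨⟨J, hJ⟩, r⟩ := y
  induction q using Quotient.ind with
  | _ α =>
  induction r using Quotient.ind with
  | _ β =>
  exact ⟨⟨⟨(I, J), hI, hJ⟩, Quotient.mk _ (α, β)⟩, rfl, rfl⟩

end Helpers

/-- The map `F_S : B_id → B_S`, given on objects by the quotient maps `Γ_I → Γ_I/S` and on
morphisms by `F_S(γ_I, γ_J) := (γ_J S, (γ_J|_I)·γ_I⁻¹)` for `I ⊆ J`, is a functor: it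
intertwines the source and target maps and satisfies `m_S ∘ (F_S × F_S) = F_S ∘ m_id`
on composable pairs.  Moreover `F_S ∘ F_s = F_S` for every `s ∈ S`, so `F_S` descends to
the quotient and induces an isomorphism of categories `B_id/S → B_S`; consequently the
induced inclusion `B_S ≅ B_id/S ⊆ G_id/S` exhibits the quotient groupoid `G_id/S` as a
groupoid completion of `B_S`: an injective functor from `B_S` to a groupoid which is a
bijection on objects (it is the identity), an isomorphism on stabilizer subgroups, and
a bijection on realizations. -/
theorem FS_functor_and_groupoid_completion
    (S : Subgroup (PiGamma Γ Finset.univ))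
    (hinj : ∀ i : A, Function.Injective
      (fun s : S => (s : PiGamma Γ Finset.univ) ⟨i, Finset.mem_univ i⟩)) :
    -- F_S intertwines the source and target maps
    (∀ m : BidMor (Γ := Γ),
      bsrcS S (FSmor S m) = FSobj S (bsrcId m) ∧
      btgtS S (FSmor S m) = FSobj S (btgtId m)) ∧
    -- m_S ∘ (F_S × F_S) = F_S ∘ m_id on composable pairs: the images are composable
    -- and the composite of the images is the image of the composite
    (∀ (I J K : Finset A) (hIJ : I ⊆ J) (hJK : J ⊆ K)
        (γI : PiGamma Γ I) (γJ : PiGamma Γ J) (γK : PiGamma Γ K),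
      Quotient.mk (relS S J) γJ =
        Quotient.mk (relS S J) ((gres hJK γK * γJ⁻¹)⁻¹ * gres hJK γK) ∧
      gres hIJ (gres hJK γK * γJ⁻¹) * (gres hIJ γJ * γI⁻¹) =
        gres (hIJ.trans hJK) γK * γI⁻¹) ∧
    -- F_S ∘ F_s = F_S for every s ∈ S
    (∀ (s : S) (m : BidMor (Γ := Γ)), FSmor S (FsMor S s m) = FSmor S m) ∧
    (∀ (s : S) (x : BidObj (Γ := Γ)),
      FSobj S ⟨x.1, x.2 * gres (Finset.subset_univ x.1.1) (s : PiGamma Γ Finset.univ)⟩ =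
        FSobj S x) ∧
    -- F_S descends to an isomorphism B_id/S → B_S: it is surjective on objects and
    -- morphisms, and its fibres are exactly the S-orbits
    Function.Surjective (FSobj S) ∧ Function.Surjective (FSmor S) ∧
    (∀ (I : Finset A) (hI : I.Nonempty) (γ γ' : PiGamma Γ I),
      FSobj S ⟨⟨I, hI⟩, γ⟩ = FSobj S ⟨⟨I, hI⟩, γ'⟩ ↔
        ∃ s : S, γ * gres (Finset.subset_univ I) (s : PiGamma Γ Finset.univ) = γ') ∧
    (∀ (p : { p : Finset A × Finset A // p.1.Nonempty ∧ p.1 ⊆ p.2 })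
        (γI γI' : PiGamma Γ p.1.1) (γJ γJ' : PiGamma Γ p.1.2),
      FSmor S ⟨p, (γI, γJ)⟩ = FSmor S ⟨p, (γI', γJ')⟩ ↔
        ∃ s : S,
          γI * gres (Finset.subset_univ p.1.1) (s : PiGamma Γ Finset.univ) = γI' ∧
          γJ * gres (Finset.subset_univ p.1.2) (s : PiGamma Γ Finset.univ) = γJ') ∧
    -- the induced inclusion ι : B_S → G_id/S is injective, intertwines source and
    -- target (it is the identity on objects), and is a functor
    Function.Injective (iotaS S) ∧
    (∀ m : BSMor S,
      gsrcS S (iotaS S m) = bsrcS S m ∧ gtgtS S (iotaS S m) = btgtS S m) ∧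
    (∀ (I J K : Finset A) (hI : I.Nonempty) (hIJ : I ⊆ J) (hJK : J ⊆ K)
        (γJ : PiGamma Γ J) (γK : PiGamma Γ K) (δI : PiGamma Γ I) (δJ : PiGamma Γ J),
      Quotient.mk (relS S J) γJ = Quotient.mk (relS S J) (δJ⁻¹ * gres hJK γK) →
      IsCompGidS S
        (iotaS S ⟨⟨(I, J), hI, hIJ⟩, (Quotient.mk (relS S J) γJ, δI)⟩)
        (iotaS S ⟨⟨(J, K), hI.mono hIJ, hJK⟩, (Quotient.mk (relS S K) γK, δJ)⟩)
        (iotaS S ⟨⟨(I, K), hI, hIJ.trans hJK⟩,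
          (Quotient.mk (relS S K) γK, gres hIJ δJ * δI)⟩)) ∧
    -- ι is an isomorphism on stabilizer subgroups
    (∀ x : BSObj S, Set.BijOn (iotaS S)
      {m : BSMor S | bsrcS S m = x ∧ btgtS S m = x}
      {m : GidSMor S | gsrcS S m = x ∧ gtgtS S m = x}) ∧
    -- ι is a bijection on realizations
    (∃ e : Quot (stepBS S) ≃ Quot (stepGidS S),
      ∀ x : BSObj S, e (Quot.mk (stepBS S) x) = Quot.mk (stepGidS S) x) ∧
    -- and G_id/S is a groupoid: composition is total on composable pairs and single
    -- valued, and every morphism has a two-sided inverse up to identities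
    (∀ m₁ m₂ : GidSMor S, gtgtS S m₁ = gsrcS S m₂ → ∃ m₃, IsCompGidS S m₁ m₂ m₃) ∧
    (∀ m₁ m₂ m₃ m₃' : GidSMor S,
      IsCompGidS S m₁ m₂ m₃ → IsCompGidS S m₁ m₂ m₃' → m₃ = m₃') ∧
    (∀ m : GidSMor S, ∃ m' e e' : GidSMor S,
      gsrcS S m' = gtgtS S m ∧ gtgtS S m' = gsrcS S m ∧
      IsCompGidS S m m' e ∧ IsIdGidS S e ∧
      IsCompGidS S m' m e' ∧ IsIdGidS S e') := by
  refine ⟨?_, ?_, ?_, ?_, ?_, ?_, ?_, ?_, iota_inj S,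
    fun m => ⟨gsrc_iota S m, gtgt_iota S m⟩, ?_, ?_, ?_, ?_, ?_, ?_⟩
  -- 1: F_S intertwines source and target
  · rintro ⟨⟨⟨I, J⟩, hI, hIJ⟩, γI, γJ⟩
    refine ⟨?_, rfl⟩
    show (⟨⟨I, hI⟩, Quotient.mk (relS S I)
        ((gres hIJ γJ * γI⁻¹)⁻¹ * gres hIJ γJ)⟩ : BSObj S)
      = ⟨⟨I, hI⟩, Quotient.mk (relS S I) γI⟩
    have h : (gres hIJ γJ * γI⁻¹)⁻¹ * gres hIJ γJ = γI := by group
    rw [h]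
  -- 2: composition
  · intro I J K hIJ hJK γI γJ γK
    constructor
    · have h : (gres hJK γK * γJ⁻¹)⁻¹ * gres hJK γK = γJ := by group
      rw [h]
    · have h1 : gres hIJ (gres hJK γK * γJ⁻¹)
          = gres (hIJ.trans hJK) γK * (gres hIJ γJ)⁻¹ := rfl
      rw [h1]; group
  -- 3: F_S ∘ F_s = F_S on morphisms
  · rintro s ⟨⟨⟨I, J⟩, hI, hIJ⟩, γI, γJ⟩
    dsimp only [FsMor, FSmor]
    refine congrArg (Sigma.mk _) (Prod.ext ?_ ?_)
    · refine Quotient.sound ⟨s⁻¹, ?_⟩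
      rw [gres_coe_inv]; group
    · show gres hIJ (γJ * gres (Finset.subset_univ J) (s : PiGamma Γ Finset.univ))
          * (γI * gres (Finset.subset_univ I) (s : PiGamma Γ Finset.univ))⁻¹
        = gres hIJ γJ * γI⁻¹
      rw [gres_mul, gres_coe S hIJ s]; group
  -- 4: F_S ∘ F_s = F_S on objects
  · rintro s ⟨⟨I, hI⟩, γ⟩
    show (⟨⟨I, hI⟩, Quotient.mk (relS S I)
        (γ * gres (Finset.subset_univ I) (s : PiGamma Γ Finset.univ))⟩ : BSObj S)
      = ⟨⟨I, hI⟩, Quotient.mk (relS S I) γ⟩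
    refine congrArg _ (Quotient.sound ⟨s⁻¹, ?_⟩)
    rw [gres_coe_inv]; group
  -- 5: surjective on objects
  · rintro ⟨⟨I, hI⟩, q⟩
    induction q using Quotient.ind with
    | _ γ => exact ⟨⟨⟨I, hI⟩, γ⟩, rfl⟩
  -- 6: surjective on morphisms
  · rintro ⟨⟨⟨I, J⟩, hI, hIJ⟩, q, δ⟩
    induction q using Quotient.ind with
    | _ γJ =>
    refine ⟨⟨⟨(I, J), hI, hIJ⟩, (δ⁻¹ * gres hIJ γJ, γJ)⟩, ?_⟩
    refine congrArg (Sigma.mk _) (Prod.ext rfl ?_)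
    show gres hIJ γJ * (δ⁻¹ * gres hIJ γJ)⁻¹ = δ
    group
  -- 7: fibres on objects
  · intro I hI γ γ'
    constructor
    · intro h
      obtain ⟨-, h2⟩ := Sigma.ext_iff.mp h
      replace h2 := eq_of_heq h2
      exact Quotient.exact h2
    · rintro ⟨s, hs⟩
      exact congrArg (fun q => (⟨⟨I, hI⟩, q⟩ : BSObj S)) (Quotient.sound ⟨s, hs⟩)
  -- 8: fibres on morphisms
  · rintro ⟨⟨I, J⟩, hI, hIJ⟩ γI γI' γJ γJ'
    constructor
    · intro h
      obtain ⟨-, h2⟩ := Sigma.ext_iff.mp h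
      replace h2 := eq_of_heq h2
      dsimp only [FSmor] at h2
      obtain ⟨hq, hd⟩ := Prod.ext_iff.mp h2
      obtain ⟨s, hs⟩ := Quotient.exact hq
      refine ⟨s, ?_, hs⟩
      have hg : gres hIJ γJ' = gres hIJ γJ
          * gres (Finset.subset_univ I) (s : PiGamma Γ Finset.univ) := by
        rw [← hs, gres_mul, gres_coe S hIJ s]
      rw [hg, mul_assoc] at hd
      have h3 : γI⁻¹ = gres (Finset.subset_univ I) (s : PiGamma Γ Finset.univ)
          * γI'⁻¹ := mul_left_cancel hd
      have h4 := congrArg Inv.inv h3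
      rw [inv_inv, mul_inv_rev, inv_inv] at h4
      rw [h4]; group
    · rintro ⟨s, hsI, hsJ⟩
      refine congrArg (Sigma.mk _) (Prod.ext (Quotient.sound ⟨s, hsJ⟩) ?_)
      show gres hIJ γJ * γI⁻¹ = gres hIJ γJ' * γI'⁻¹
      rw [← hsJ, ← hsI, gres_mul, gres_coe S hIJ s]; group
  -- 11: iota is a functor
  · intro I J K hI hIJ hJK γJ γK δI δJ h
    obtain ⟨s, hs⟩ := Quotient.exact h
    refine ⟨I, J, K, hI, hI.mono hIJ, (hI.mono hIJ).mono hJK,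
      δI⁻¹ * gres hIJ (δJ⁻¹ * gres hJK γK), δJ⁻¹ * gres hJK γK, γK, ?_, rfl, ?_⟩
    · show (⟨⟨(I, J), hI, hI.mono hIJ⟩, Quotient.mk (relS2 S I J)
          (δI⁻¹ * gres hIJ γJ, γJ)⟩ : GidSMor S) = _
      refine congrArg (Sigma.mk _) (Quotient.sound ⟨s, ?_, hs⟩)
      show δI⁻¹ * gres hIJ γJ * gres (Finset.subset_univ I)
          (s : PiGamma Γ Finset.univ) = _
      rw [mul_assoc, ← gres_coe S hIJ s, ← gres_mul, hs]
    · show (⟨⟨(I, K), hI, (hI.mono hIJ).mono hJK⟩, Quotient.mk (relS2 S I K)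
          ((gres hIJ δJ * δI)⁻¹ * gres (hIJ.trans hJK) γK, γK)⟩ : GidSMor S) = _
      refine congrArg (Sigma.mk _) (congrArg (Quotient.mk _) (Prod.ext ?_ rfl))
      show (gres hIJ δJ * δI)⁻¹ * gres (hIJ.trans hJK) γK
        = δI⁻¹ * gres hIJ (δJ⁻¹ * gres hJK γK)
      have h1 : gres hIJ (δJ⁻¹ * gres hJK γK)
          = (gres hIJ δJ)⁻¹ * gres (hIJ.trans hJK) γK := rfl
      rw [h1]; group
  -- 12: iso on stabilizers
  · intro x
    refine ⟨?_, fun m _ m' _ h => iota_inj S h, ?_⟩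
    · rintro m ⟨h1, h2⟩
      exact ⟨by rw [gsrc_iota]; exact h1, by rw [gtgt_iota]; exact h2⟩
    · obtain ⟨⟨I, hI⟩, q⟩ := x
      rintro ⟨⟨⟨I', J'⟩, hI', hJ'⟩, w⟩ ⟨hsrc, htgt⟩
      induction w using Quotient.ind with
      | _ p =>
      obtain ⟨α, β⟩ := p
      obtain ⟨hs1, hs2⟩ := Sigma.ext_iff.mp hsrc
      obtain ⟨ht1, ht2⟩ := Sigma.ext_iff.mp htgt
      obtain rfl : I = I' := (congrArg Subtype.val hs1).symm
      obtain rfl : I = J' := (congrArg Subtype.val ht1).symm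
      replace hs2 := eq_of_heq hs2; replace ht2 := eq_of_heq ht2
      refine ⟨⟨⟨(I, I), hI, subset_refl I⟩, (Quotient.mk _ β, β * α⁻¹)⟩, ⟨?_, ?_⟩, ?_⟩
      · show (⟨⟨I, hI⟩, Quotient.mk (relS S I)
            ((β * α⁻¹)⁻¹ * gres (subset_refl I) β)⟩ : BSObj S) = _
        have h : (β * α⁻¹)⁻¹ * gres (subset_refl I) β = α := by
          rw [gres_refl]; group
        rw [h]
        exact Sigma.ext rfl (heq_of_eq hs2)
      · exact Sigma.ext rfl (heq_of_eq ht2)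
      · refine congrArg (Sigma.mk _) (congrArg (Quotient.mk _) (Prod.ext ?_ rfl))
        show (β * α⁻¹)⁻¹ * gres (subset_refl I) β = α
        rw [gres_refl]; group
  -- 13: bijection on realizations
  · refine ⟨⟨Quot.lift (Quot.mk (stepGidS S))
        (fun a b _ => Quot.sound (stepGidS_all S a b)),
      Quot.lift (Quot.mk (stepBS S)) (fun a b _ => connBS S a b), ?_, ?_⟩,
      fun x => rfl⟩
    · intro q; induction q using Quot.ind with
      | _ x => rfl
    · intro q; induction q using Quot.ind with
      | _ x => rfl
  -- 14: composition is total
  · rintro ⟨⟨⟨I, J⟩, hI, hJ⟩, w₁⟩ ⟨⟨⟨J', K⟩, hJ', hK⟩, w₂⟩ h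
    induction w₁ using Quotient.ind with
    | _ p₁ =>
    induction w₂ using Quotient.ind with
    | _ p₂ =>
    obtain ⟨α, β⟩ := p₁
    obtain ⟨β', γ⟩ := p₂
    obtain ⟨h1, h2⟩ := Sigma.ext_iff.mp h
    obtain rfl : J = J' := congrArg Subtype.val h1
    replace h2 := eq_of_heq h2
    obtain ⟨s, hs⟩ := Quotient.exact h2
    refine ⟨⟨⟨(I, K), hI, hK⟩, Quotient.mk _
        (α, γ * (gres (Finset.subset_univ K) (s : PiGamma Γ Finset.univ))⁻¹)⟩,
      I, J, K, hI, hJ, hK, α, β,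
      γ * (gres (Finset.subset_univ K) (s : PiGamma Γ Finset.univ))⁻¹, rfl, ?_, rfl⟩
    refine congrArg (Sigma.mk _) (Quotient.sound ⟨s⁻¹, ?_, ?_⟩)
    · rw [gres_coe_inv, ← hs]; group
    · rw [gres_coe_inv]
  -- 15: composition is single-valued
  · rintro m₁ m₂ m₃ m₃'
      ⟨I, J, K, hI, hJ, hK, γI, γJ, γK, rfl, rfl, rfl⟩
      ⟨I', J', K', hI', hJ', hK', γI', γJ', γK', e1, e2, rfl⟩
    obtain ⟨f1, g1⟩ := Sigma.ext_iff.mp e1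
    obtain ⟨f2, g2⟩ := Sigma.ext_iff.mp e2
    have hv1 := congrArg Subtype.val f1
    have hv2 := congrArg Subtype.val f2
    obtain rfl : I = I' := congrArg Prod.fst hv1
    obtain rfl : J = J' := congrArg Prod.snd hv1
    obtain rfl : K = K' := congrArg Prod.snd hv2
    rw [heq_eq_eq] at g1 g2
    obtain ⟨s, hs1, hs2⟩ := Quotient.exact g1
    obtain ⟨t, ht1, ht2⟩ := Quotient.exact g2
    obtain rfl : s = t := by
      refine free_action S hinj hJ ?_
      have := hs2.trans ht1.symm
      exact mul_left_cancel this
    exact congrArg (Sigma.mk _) (Quotient.sound ⟨s, hs1, ht2⟩)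
  -- 16: inverses
  · rintro ⟨⟨⟨I, J⟩, hI, hJ⟩, w⟩
    induction w using Quotient.ind with
    | _ p =>
    obtain ⟨α, β⟩ := p
    exact ⟨⟨⟨(J, I), hJ, hI⟩, Quotient.mk _ (β, α)⟩,
      ⟨⟨(I, I), hI, hI⟩, Quotient.mk _ (α, α)⟩,
      ⟨⟨(J, J), hJ, hJ⟩, Quotient.mk _ (β, β)⟩, rfl, rfl,
      ⟨I, J, I, hI, hJ, hI, α, β, α, rfl, rfl, rfl⟩, ⟨I, hI, α, rfl⟩,
      ⟨J, I, J, hJ, hI, hJ, β, α, β, rfl, rfl, rfl⟩, ⟨J, hJ, β, rfl⟩⟩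

end Stmt10Thm
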